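/- arXiv:1911.01473 — 2 statements merged into one kernel-verified Lean document; each statement's English description precedes it below -/
import Mathlib

section
/- If the block matrix [[Q, M],[Mᵀ, R]] is symmetric positive semidefinite and R is symmetric positive definite, and P is symmetric positive semidefinite, then P₊ := Riccati(P, A, B, Q, M, R) = Q + Aᵀ P A − (M + Aᵀ P B)(R + Bᵀ P B)⁻¹(M + Aᵀ P B)ᵀ is symmetric positive semidefinite. -/
open Matrix

/-- The Riccati update preserves symmetric positive semidefiniteness. -/
theorem stmt2 {n m : ℕ}
    (A Q : Matrix (Fin n) (Fin n) ℝ)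
    (B M : Matrix (Fin n) (Fin m) ℝ)
    (R : Matrix (Fin m) (Fin m) ℝ)
    (P : Matrix (Fin n) (Fin n) ℝ)
    (hblock : (Matrix.fromBlocks Q M Mᵀ R).PosSemidef)
    (hR : R.PosDef)
    (hP : P.PosSemidef) :
    (Q + Aᵀ * P * A
      - (M + Aᵀ * P * B) * (R + Bᵀ * P * B)⁻¹ * (M + Aᵀ * P * B)ᵀ).PosSemidef := by
  have hD : (R + Bᵀ * P * B).PosDef := hR.add_posSemidef (hP.conjTranspose_mul_mul_same B)
  have : Invertible (R + Bᵀ * P * B) := hD.isUnit.invertible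
  have hconj : (fromRows Aᵀ Bᵀ * P * (fromRows Aᵀ Bᵀ)ᴴ).PosSemidef :=
    hP.mul_mul_conjTranspose_same _
  have heq : fromRows Aᵀ Bᵀ * P * (fromRows Aᵀ Bᵀ)ᴴ
      = fromBlocks (Aᵀ * P * A) (Aᵀ * P * B) (Bᵀ * P * A) (Bᵀ * P * B) := by
    rw [conjTranspose_fromRows_eq_fromCols_conjTranspose, fromRows_mul, fromRows_mul,
      mul_fromCols, mul_fromCols, fromRows_fromCols_eq_fromBlocks]
    simp
  rw [heq] at hconj
  have hbig : (fromBlocks (Q + Aᵀ * P * A) (M + Aᵀ * P * B) (M + Aᵀ * P * B)ᵀ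
      (R + Bᵀ * P * B)).PosSemidef := by
    have := hblock.add hconj
    rw [fromBlocks_add] at this
    convert this using 2
    · have hPt : Pᵀ = P := by simpa using hP.1.eq
      rw [transpose_add, transpose_mul, transpose_mul, transpose_transpose,
        Matrix.mul_assoc, hPt]
  have := (PosDef.fromBlocks₂₂ (Q + Aᵀ * P * A) (M + Aᵀ * P * B) hD).mp (by simpa using hbig)
  simpa using this
end

section
/- Finite-horizon stochastic completion of squares: let x_{t+1} = A x_t + B u_t + w_t, where w_t are independent zero-mean square-integrable vectors independent of (x_0, u_0,…,u_t, x_1,…,x_t). With P_t, L_t, Δ_t as in the deterministic completion of squares, E[∑_{t=0}^{T−1}(x_tᵀ Q_t x_t + u_tᵀ R_t u_t) + x_Tᵀ Q_T x_T] = E[x_0ᵀ P_0 x_0] + ∑_{t=0}^{T−1} E[(u_t + L_t x_t)ᵀ Δ_t (u_t + L_t x_t)] + ∑_{t=0}^{T−1} E[w_tᵀ P_{t+1} w_t]. -/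
open Matrix Finset MeasureTheory ProbabilityTheory
open scoped ENNReal

section Helpers

lemma dot_t {n m : ℕ} (M : Matrix (Fin n) (Fin m) ℝ) (v : Fin m → ℝ) (w : Fin n → ℝ) :
    v ⬝ᵥ Mᵀ *ᵥ w = (M *ᵥ v) ⬝ᵥ w := by
  rw [Matrix.dotProduct_mulVec, Matrix.vecMul_transpose]

lemma dot_sym {n : ℕ} {P' : Matrix (Fin n) (Fin n) ℝ} (hP' : P'ᵀ = P') (v w : Fin n → ℝ) :
    v ⬝ᵥ P' *ᵥ w = w ⬝ᵥ P' *ᵥ v := by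
  conv_lhs => rw [← hP', dot_t, dotProduct_comm]

lemma key_alg {n m : ℕ} (A : Matrix (Fin n) (Fin n) ℝ) (B : Matrix (Fin n) (Fin m) ℝ)
    (Q Pt P' : Matrix (Fin n) (Fin n) ℝ) (R Δ : Matrix (Fin m) (Fin m) ℝ)
    (L : Matrix (Fin m) (Fin n) ℝ)
    (hP'sym : P'ᵀ = P') (hΔsym : Δᵀ = Δ)
    (hΔL : Δ * L = Bᵀ * P' * A)
    (hPt : Pt = Q + Aᵀ * P' * A - Lᵀ * (Δ * L))
    (hΔdef : Δ = R + Bᵀ * P' * B)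
    (xv wv : Fin n → ℝ) (uv : Fin m → ℝ) :
    xv ⬝ᵥ Q *ᵥ xv + uv ⬝ᵥ R *ᵥ uv
      + (A *ᵥ xv + B *ᵥ uv + wv) ⬝ᵥ P' *ᵥ (A *ᵥ xv + B *ᵥ uv + wv)
    = xv ⬝ᵥ Pt *ᵥ xv + (uv + L *ᵥ xv) ⬝ᵥ Δ *ᵥ (uv + L *ᵥ xv) + wv ⬝ᵥ P' *ᵥ wv
      + 2 * ((A *ᵥ xv + B *ᵥ uv) ⬝ᵥ P' *ᵥ wv) := by
  set a := A *ᵥ xv with ha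
  set b := B *ᵥ uv with hb
  set l := L *ᵥ xv with hl
  have f1 : xv ⬝ᵥ Pt *ᵥ xv = xv ⬝ᵥ Q *ᵥ xv + a ⬝ᵥ P' *ᵥ a - l ⬝ᵥ Δ *ᵥ l := by
    rw [hPt]
    simp only [Matrix.sub_mulVec, Matrix.add_mulVec, dotProduct_sub, dotProduct_add,
      ← Matrix.mulVec_mulVec]
    rw [dot_t A, dot_t L, ha, hl]
  have hcross : uv ⬝ᵥ Δ *ᵥ l = b ⬝ᵥ P' *ᵥ a := by
    rw [hl, Matrix.mulVec_mulVec, hΔL, ← Matrix.mulVec_mulVec, ← Matrix.mulVec_mulVec,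
      dot_t B, ← ha, ← hb]
  have f2 : (uv + l) ⬝ᵥ Δ *ᵥ (uv + l)
      = uv ⬝ᵥ R *ᵥ uv + b ⬝ᵥ P' *ᵥ b + 2 * (b ⬝ᵥ P' *ᵥ a) + l ⬝ᵥ Δ *ᵥ l := by
    have h1 : l ⬝ᵥ Δ *ᵥ uv = uv ⬝ᵥ Δ *ᵥ l := dot_sym hΔsym l uv
    have h2 : uv ⬝ᵥ Δ *ᵥ uv = uv ⬝ᵥ R *ᵥ uv + b ⬝ᵥ P' *ᵥ b := by
      rw [hΔdef, Matrix.add_mulVec, dotProduct_add, ← Matrix.mulVec_mulVec,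
        ← Matrix.mulVec_mulVec, dot_t B, ← hb]
    simp only [Matrix.mulVec_add, dotProduct_add, add_dotProduct, h1, hcross, h2]
    ring
  have f3 : (a + b + wv) ⬝ᵥ P' *ᵥ (a + b + wv)
      = a ⬝ᵥ P' *ᵥ a + b ⬝ᵥ P' *ᵥ b + wv ⬝ᵥ P' *ᵥ wv + 2 * (b ⬝ᵥ P' *ᵥ a)
        + 2 * ((a + b) ⬝ᵥ P' *ᵥ wv) := by
    have h1 : b ⬝ᵥ P' *ᵥ a = a ⬝ᵥ P' *ᵥ b := dot_sym hP'sym b a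
    have h2 : wv ⬝ᵥ P' *ᵥ a = a ⬝ᵥ P' *ᵥ wv := dot_sym hP'sym wv a
    have h3 : wv ⬝ᵥ P' *ᵥ b = b ⬝ᵥ P' *ᵥ wv := dot_sym hP'sym wv b
    simp only [Matrix.mulVec_add, dotProduct_add, add_dotProduct]
    rw [h1, h2, h3]; ring
  rw [f1, f2, f3]; ring

lemma riccati_step {n m : ℕ} (A : Matrix (Fin n) (Fin n) ℝ) (B : Matrix (Fin n) (Fin m) ℝ)
    (Q Pt P' : Matrix (Fin n) (Fin n) ℝ) (R Δ : Matrix (Fin m) (Fin m) ℝ)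
    (L : Matrix (Fin m) (Fin n) ℝ)
    (hR : R.PosDef) (hP' : P'.PosSemidef)
    (hPdef : Pt = Q + Aᵀ * P' * A
      - Aᵀ * P' * B * (R + Bᵀ * P' * B)⁻¹ * Bᵀ * P' * A)
    (hLdef : L = (R + Bᵀ * P' * B)⁻¹ * Bᵀ * P' * A)
    (hΔdef : Δ = R + Bᵀ * P' * B) :
    Δᵀ = Δ ∧ Δ * L = Bᵀ * P' * A ∧ Pt = Q + Aᵀ * P' * A - Lᵀ * (Δ * L)
      ∧ P'ᵀ = P' := by
  have hP'sym : P'ᵀ = P' := by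
    rw [← Matrix.conjTranspose_eq_transpose_of_trivial]; exact hP'.1
  have hBTB : (Bᵀ * P' * B).PosSemidef := by
    have := hP'.conjTranspose_mul_mul_same (B := B)
    rwa [Matrix.conjTranspose_eq_transpose_of_trivial] at this
  have hΔpd : Δ.PosDef := by rw [hΔdef]; exact hR.add_posSemidef hBTB
  have hΔsym : Δᵀ = Δ := by
    rw [← Matrix.conjTranspose_eq_transpose_of_trivial]; exact hΔpd.isHermitian
  have hdet : IsUnit Δ.det := hΔpd.det_pos.ne'.isUnit
  have hinv : Δ * Δ⁻¹ = 1 := Matrix.mul_nonsing_inv _ hdet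
  have hL' : L = Δ⁻¹ * (Bᵀ * P' * A) := by
    rw [hLdef, hΔdef]; simp only [Matrix.mul_assoc]
  have hΔL : Δ * L = Bᵀ * P' * A := by
    rw [hL', ← Matrix.mul_assoc, hinv, Matrix.one_mul]
  have hinvsym : (Δ⁻¹)ᵀ = Δ⁻¹ := by
    rw [Matrix.transpose_nonsing_inv, hΔsym]
  have hLT : Lᵀ = Aᵀ * P' * B * Δ⁻¹ := by
    rw [hL']
    simp only [Matrix.transpose_mul, Matrix.transpose_transpose, hinvsym, hP'sym,
      Matrix.mul_assoc]
  refine ⟨hΔsym, hΔL, ?_, hP'sym⟩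
  rw [hPdef, hLT, hΔL, hΔdef]
  simp only [Matrix.mul_assoc]

lemma riccati_psd {n m : ℕ} (A : Matrix (Fin n) (Fin n) ℝ) (B : Matrix (Fin n) (Fin m) ℝ)
    (Q Pt P' : Matrix (Fin n) (Fin n) ℝ) (R Δ : Matrix (Fin m) (Fin m) ℝ)
    (L : Matrix (Fin m) (Fin n) ℝ)
    (hQ : Q.PosSemidef) (hR : R.PosDef) (hP' : P'.PosSemidef)
    (hPdef : Pt = Q + Aᵀ * P' * A
      - Aᵀ * P' * B * (R + Bᵀ * P' * B)⁻¹ * Bᵀ * P' * A)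
    (hLdef : L = (R + Bᵀ * P' * B)⁻¹ * Bᵀ * P' * A)
    (hΔdef : Δ = R + Bᵀ * P' * B) :
    Pt.PosSemidef := by
  obtain ⟨hΔsym, hΔL, hPtf, hP'sym⟩ :=
    riccati_step A B Q Pt P' R Δ L hR hP' hPdef hLdef hΔdef
  rw [Matrix.posSemidef_iff_dotProduct_mulVec]
  constructor
  · show Ptᴴ = Pt
    rw [Matrix.conjTranspose_eq_transpose_of_trivial, hPtf]
    have hQsym : Qᵀ = Q := by
      rw [← Matrix.conjTranspose_eq_transpose_of_trivial]; exact hQ.1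
    simp only [Matrix.transpose_sub, Matrix.transpose_add, Matrix.transpose_mul,
      Matrix.transpose_transpose, hQsym, hP'sym, hΔsym, Matrix.mul_assoc]
  · intro v
    have hk := key_alg A B Q Pt P' R Δ L hP'sym hΔsym hΔL hPtf hΔdef
      v 0 (-(L *ᵥ v))
    simp only [star_trivial]
    have h1 : (-(L *ᵥ v)) ⬝ᵥ R *ᵥ (-(L *ᵥ v)) = (L *ᵥ v) ⬝ᵥ R *ᵥ (L *ᵥ v) := by
      simp [Matrix.mulVec_neg]
    have h2 : (-(L *ᵥ v) + L *ᵥ v) ⬝ᵥ Δ *ᵥ (-(L *ᵥ v) + L *ᵥ v) = 0 := by simp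
    have h3 : (0 : Fin n → ℝ) ⬝ᵥ P' *ᵥ (0 : Fin n → ℝ) = 0 := by simp
    have h4 : (A *ᵥ v + B *ᵥ -(L *ᵥ v)) ⬝ᵥ P' *ᵥ (0 : Fin n → ℝ) = 0 := by simp
    rw [h1, h2, h3, h4] at hk
    have hz : 0 ≤ (A *ᵥ v + B *ᵥ -(L *ᵥ v) + 0) ⬝ᵥ P' *ᵥ (A *ᵥ v + B *ᵥ -(L *ᵥ v) + 0) := by
      simpa using hP'.dotProduct_mulVec_nonneg (A *ᵥ v + B *ᵥ -(L *ᵥ v) + 0)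
    have hq : 0 ≤ v ⬝ᵥ Q *ᵥ v := by simpa using hQ.dotProduct_mulVec_nonneg v
    have hr : 0 ≤ (L *ᵥ v) ⬝ᵥ R *ᵥ (L *ᵥ v) := by simpa using hR.posSemidef.dotProduct_mulVec_nonneg (L *ᵥ v)
    linarith

variable {Ω : Type*} [MeasurableSpace Ω] {μ : Measure Ω} [IsProbabilityMeasure μ]

lemma memLp_apply {k : ℕ} {f : Ω → Fin k → ℝ} (hf : MemLp f 2 μ) (i : Fin k) :
    MemLp (fun ω => f ω i) 2 μ :=
  (ContinuousLinearMap.proj (R := ℝ) (φ := fun _ : Fin k => ℝ) i).comp_memLp' hf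

lemma mul_L2_integrable {f g : Ω → ℝ} (hf : MemLp f 2 μ) (hg : MemLp g 2 μ) :
    Integrable (fun ω => f ω * g ω) μ := by
  have h : (1 : ℝ≥0∞) / 1 = 1 / 2 + 1 / 2 := by
    rw [ENNReal.div_add_div_same, one_div_one]
    rw [one_add_one_eq_two, ENNReal.div_self two_ne_zero ENNReal.ofNat_ne_top]
  have := memLp_one_iff_integrable.mp (hg.smul hf (r := 1))
  exact this

lemma memLp_mulVec {k l : ℕ} (M : Matrix (Fin k) (Fin l) ℝ) {f : Ω → Fin l → ℝ}
    (hf : MemLp f 2 μ) : MemLp (fun ω => M *ᵥ f ω) 2 μ :=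
  (LinearMap.toContinuousLinearMap M.mulVecLin).comp_memLp' hf

lemma measurable_mulVec {k l : ℕ} (M : Matrix (Fin k) (Fin l) ℝ) :
    Measurable (fun v : Fin l → ℝ => M *ᵥ v) :=
  (LinearMap.toContinuousLinearMap M.mulVecLin).continuous.measurable

lemma quad_expand {k l : ℕ} (M : Matrix (Fin k) (Fin l) ℝ) (f : Ω → Fin k → ℝ)
    (g : Ω → Fin l → ℝ) :
    (fun ω => f ω ⬝ᵥ M *ᵥ g ω) = fun ω => ∑ i, ∑ j, M i j * (f ω i * g ω j) := by
  funext ω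
  simp only [dotProduct, Matrix.mulVec, Finset.mul_sum]
  exact Finset.sum_congr rfl fun i _ => Finset.sum_congr rfl fun j _ => by ring

lemma integrable_quad {k l : ℕ} (M : Matrix (Fin k) (Fin l) ℝ) {f : Ω → Fin k → ℝ}
    {g : Ω → Fin l → ℝ} (hf : MemLp f 2 μ) (hg : MemLp g 2 μ) :
    Integrable (fun ω => f ω ⬝ᵥ M *ᵥ g ω) μ := by
  rw [quad_expand]
  exact integrable_finset_sum _ fun i _ => integrable_finset_sum _ fun j _ =>
    (mul_L2_integrable (memLp_apply hf i) (memLp_apply hg j)).const_mul _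

end Helpers

/-- Finite-horizon stochastic completion of squares. -/
theorem stmt15 {n m : ℕ} (T : ℕ) {Ω : Type*} [MeasurableSpace Ω]
    (μ : Measure Ω) [IsProbabilityMeasure μ]
    (A : Matrix (Fin n) (Fin n) ℝ) (B : Matrix (Fin n) (Fin m) ℝ)
    (Q P : ℕ → Matrix (Fin n) (Fin n) ℝ)
    (R Δ : ℕ → Matrix (Fin m) (Fin m) ℝ)
    (L : ℕ → Matrix (Fin m) (Fin n) ℝ)
    (hQ : ∀ t, (Q t).PosSemidef) (hR : ∀ t, (R t).PosDef)
    (hPT : P T = Q T)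
    (hP : ∀ t < T, P t = Q t + Aᵀ * P (t + 1) * A
      - Aᵀ * P (t + 1) * B * (R t + Bᵀ * P (t + 1) * B)⁻¹ * Bᵀ * P (t + 1) * A)
    (hL : ∀ t < T, L t = (R t + Bᵀ * P (t + 1) * B)⁻¹ * Bᵀ * P (t + 1) * A)
    (hΔ : ∀ t < T, Δ t = R t + Bᵀ * P (t + 1) * B)
    (x w : ℕ → Ω → Fin n → ℝ) (u : ℕ → Ω → Fin m → ℝ)
    (hx : ∀ t, MemLp (x t) 2 μ) (hu : ∀ t, MemLp (u t) 2 μ)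
    (hw : ∀ t, MemLp (w t) 2 μ)
    (hwmean : ∀ t < T, ∫ ω, w t ω ∂μ = 0)
    (hwindep : ∀ s < T, ∀ t < T, s ≠ t → IndepFun (w s) (w t) μ)
    (hwpast : ∀ t < T, IndepFun (w t)
      (fun ω => ((fun s : Fin (t + 1) => x s ω), (fun s : Fin (t + 1) => u s ω))) μ)
    (hdyn : ∀ t < T, ∀ ω, x (t + 1) ω = A *ᵥ x t ω + B *ᵥ u t ω + w t ω) :
    ∫ ω, ((∑ t ∈ Finset.range T,
            (x t ω ⬝ᵥ Q t *ᵥ x t ω + u t ω ⬝ᵥ R t *ᵥ u t ω))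
          + x T ω ⬝ᵥ Q T *ᵥ x T ω) ∂μ
    = (∫ ω, x 0 ω ⬝ᵥ P 0 *ᵥ x 0 ω ∂μ)
      + (∑ t ∈ Finset.range T,
          ∫ ω, (u t ω + L t *ᵥ x t ω) ⬝ᵥ Δ t *ᵥ (u t ω + L t *ᵥ x t ω) ∂μ)
      + ∑ t ∈ Finset.range T, ∫ ω, w t ω ⬝ᵥ P (t + 1) *ᵥ w t ω ∂μ := by
  -- positive semidefiniteness of the Riccati matrices
  have hPsd : ∀ d t, t + d = T → (P t).PosSemidef := by
    intro d
    induction d with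
    | zero =>
      intro t ht
      have h : t = T := by omega
      rw [h, hPT]; exact hQ T
    | succ d ih =>
      intro t ht
      have h1 : t < T := by omega
      have hp' := ih (t + 1) (by omega)
      exact riccati_psd A B (Q t) (P t) (P (t + 1)) (R t) (Δ t) (L t)
        (hQ t) (hR t) hp' (hP t h1) (hL t h1) (hΔ t h1)
  have hfacts : ∀ t < T, (Δ t)ᵀ = Δ t ∧ Δ t * L t = Bᵀ * P (t + 1) * A
      ∧ P t = Q t + Aᵀ * P (t + 1) * A - (L t)ᵀ * (Δ t * L t)
      ∧ (P (t + 1))ᵀ = P (t + 1) :=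
    fun t ht => riccati_step A B (Q t) (P t) (P (t + 1)) (R t) (Δ t) (L t)
      (hR t) (hPsd (T - (t + 1)) (t + 1) (by omega)) (hP t ht) (hL t ht) (hΔ t ht)
  -- integrability
  have iQ : ∀ t, Integrable (fun ω => x t ω ⬝ᵥ Q t *ᵥ x t ω) μ :=
    fun t => integrable_quad _ (hx t) (hx t)
  have iR : ∀ t, Integrable (fun ω => u t ω ⬝ᵥ R t *ᵥ u t ω) μ :=
    fun t => integrable_quad _ (hu t) (hu t)
  have iP : ∀ t, Integrable (fun ω => x t ω ⬝ᵥ P t *ᵥ x t ω) μ :=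
    fun t => integrable_quad _ (hx t) (hx t)
  have hsqmem : ∀ t, MemLp (fun ω => u t ω + L t *ᵥ x t ω) 2 μ :=
    fun t => (hu t).add (memLp_mulVec _ (hx t))
  have iSq : ∀ t, Integrable
      (fun ω => (u t ω + L t *ᵥ x t ω) ⬝ᵥ Δ t *ᵥ (u t ω + L t *ᵥ x t ω)) μ :=
    fun t => integrable_quad _ (hsqmem t) (hsqmem t)
  have iW : ∀ t, Integrable (fun ω => w t ω ⬝ᵥ P (t + 1) *ᵥ w t ω) μ :=
    fun t => integrable_quad _ (hw t) (hw t)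
  have hfm : ∀ t, MemLp (fun ω => A *ᵥ x t ω + B *ᵥ u t ω) 2 μ :=
    fun t => (memLp_mulVec A (hx t)).add (memLp_mulVec B (hu t))
  have iC : ∀ t, Integrable
      (fun ω => (A *ᵥ x t ω + B *ᵥ u t ω) ⬝ᵥ P (t + 1) *ᵥ w t ω) μ :=
    fun t => integrable_quad _ (hfm t) (hw t)
  -- the cross term has zero expectation
  have hcross0 : ∀ t, t < T →
      ∫ ω, (A *ᵥ x t ω + B *ᵥ u t ω) ⬝ᵥ P (t + 1) *ᵥ w t ω ∂μ = 0 := by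
    intro t ht
    have hψ : Measurable (fun p : (Fin (t + 1) → Fin n → ℝ) × (Fin (t + 1) → Fin m → ℝ) =>
        A *ᵥ p.1 (Fin.last t) + B *ᵥ p.2 (Fin.last t)) :=
      ((measurable_mulVec A).comp ((measurable_pi_apply _).comp measurable_fst)).add
        ((measurable_mulVec B).comp ((measurable_pi_apply _).comp measurable_snd))
    have hind : IndepFun (fun ω => A *ᵥ x t ω + B *ᵥ u t ω) (w t) μ := by
      have h2 := (hwpast t ht).symm.comp hψ measurable_id
      have he : ((fun p : (Fin (t + 1) → Fin n → ℝ) × (Fin (t + 1) → Fin m → ℝ) =>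
            A *ᵥ p.1 (Fin.last t) + B *ᵥ p.2 (Fin.last t)) ∘
          (fun ω => ((fun s : Fin (t + 1) => x s ω), (fun s : Fin (t + 1) => u s ω))))
          = fun ω => A *ᵥ x t ω + B *ᵥ u t ω := by
        funext ω; simp [Function.comp, Fin.val_last]
      rwa [he] at h2
    have hwint : Integrable (w t) μ :=
      memLp_one_iff_integrable.mp ((hw t).mono_exponent one_le_two)
    have hwj : ∀ j, ∫ ω, w t ω j ∂μ = 0 := by
      intro j
      have hc := (ContinuousLinearMap.proj (R := ℝ) (φ := fun _ : Fin n => ℝ) j)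
        |>.integral_comp_comm hwint
      rw [hwmean t ht] at hc
      simpa using hc
    have hint : ∀ (i : Fin n) (j : Fin n),
        ∫ ω, (A *ᵥ x t ω + B *ᵥ u t ω) i * w t ω j ∂μ = 0 := by
      intro i j
      have hij : IndepFun (fun ω => (A *ᵥ x t ω + B *ᵥ u t ω) i)
          (fun ω => w t ω j) μ :=
        hind.comp (measurable_pi_apply i) (measurable_pi_apply j)
      have heq := hij.integral_mul_eq_mul_integral (memLp_apply (hfm t) i).aestronglyMeasurable
        (memLp_apply (hw t) j).aestronglyMeasurable
      calc ∫ ω, (A *ᵥ x t ω + B *ᵥ u t ω) i * w t ω j ∂μ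
          = (∫ ω, (A *ᵥ x t ω + B *ᵥ u t ω) i ∂μ) * ∫ ω, w t ω j ∂μ := heq
        _ = 0 := by rw [hwj j, mul_zero]
    rw [quad_expand, integral_finset_sum _ (fun i _ => integrable_finset_sum _ fun j _ =>
      (mul_L2_integrable (memLp_apply (hfm t) i) (memLp_apply (hw t) j)).const_mul (P (t + 1) i j))]
    refine Finset.sum_eq_zero fun i _ => ?_
    rw [integral_finset_sum _ (fun j _ =>
      (mul_L2_integrable (memLp_apply (hfm t) i) (memLp_apply (hw t) j)).const_mul (P (t + 1) i j))]
    refine Finset.sum_eq_zero fun j _ => ?_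
    rw [MeasureTheory.integral_const_mul, hint i j, mul_zero]
  -- per-step integral identity
  have step : ∀ t, t < T →
      ∫ ω, (x t ω ⬝ᵥ Q t *ᵥ x t ω + u t ω ⬝ᵥ R t *ᵥ u t ω) ∂μ
      = ((∫ ω, x t ω ⬝ᵥ P t *ᵥ x t ω ∂μ)
          - ∫ ω, x (t + 1) ω ⬝ᵥ P (t + 1) *ᵥ x (t + 1) ω ∂μ)
        + (∫ ω, (u t ω + L t *ᵥ x t ω) ⬝ᵥ Δ t *ᵥ (u t ω + L t *ᵥ x t ω) ∂μ)
        + ∫ ω, w t ω ⬝ᵥ P (t + 1) *ᵥ w t ω ∂μ := by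
    intro t ht
    obtain ⟨hΔsym, hΔL, hPtf, hP'sym⟩ := hfacts t ht
    have ptw : (fun ω => x t ω ⬝ᵥ Q t *ᵥ x t ω + u t ω ⬝ᵥ R t *ᵥ u t ω)
        = fun ω => (x t ω ⬝ᵥ P t *ᵥ x t ω
            + (u t ω + L t *ᵥ x t ω) ⬝ᵥ Δ t *ᵥ (u t ω + L t *ᵥ x t ω)
            + w t ω ⬝ᵥ P (t + 1) *ᵥ w t ω
            + 2 * ((A *ᵥ x t ω + B *ᵥ u t ω) ⬝ᵥ P (t + 1) *ᵥ w t ω))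
            - x (t + 1) ω ⬝ᵥ P (t + 1) *ᵥ x (t + 1) ω := by
      funext ω
      have hk := key_alg A B (Q t) (P t) (P (t + 1)) (R t) (Δ t) (L t)
        hP'sym hΔsym hΔL hPtf (hΔ t ht) (x t ω) (w t ω) (u t ω)
      rw [hdyn t ht ω]
      linarith [hk]
    have i2 : Integrable (fun ω => x t ω ⬝ᵥ P t *ᵥ x t ω
        + (u t ω + L t *ᵥ x t ω) ⬝ᵥ Δ t *ᵥ (u t ω + L t *ᵥ x t ω)) μ :=
      (iP t).add (iSq t)
    have i3 : Integrable (fun ω => x t ω ⬝ᵥ P t *ᵥ x t ω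
        + (u t ω + L t *ᵥ x t ω) ⬝ᵥ Δ t *ᵥ (u t ω + L t *ᵥ x t ω)
        + w t ω ⬝ᵥ P (t + 1) *ᵥ w t ω) μ := i2.add (iW t)
    have i4 : Integrable (fun ω => x t ω ⬝ᵥ P t *ᵥ x t ω
        + (u t ω + L t *ᵥ x t ω) ⬝ᵥ Δ t *ᵥ (u t ω + L t *ᵥ x t ω)
        + w t ω ⬝ᵥ P (t + 1) *ᵥ w t ω
        + 2 * ((A *ᵥ x t ω + B *ᵥ u t ω) ⬝ᵥ P (t + 1) *ᵥ w t ω)) μ :=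
      i3.add ((iC t).const_mul 2)
    rw [ptw, integral_sub i4 (iP (t + 1)),
      integral_add i3 ((iC t).const_mul 2),
      integral_add i2 (iW t),
      integral_add (iP t) (iSq t),
      integral_const_mul, hcross0 t ht]
    ring
  -- assemble
  have isum : Integrable (fun ω => ∑ t ∈ Finset.range T,
      (x t ω ⬝ᵥ Q t *ᵥ x t ω + u t ω ⬝ᵥ R t *ᵥ u t ω)) μ := by
    apply integrable_finset_sum
    intro t _
    exact (iQ t).add (iR t)
  have hLHS : ∫ ω, ((∑ t ∈ Finset.range T,
        (x t ω ⬝ᵥ Q t *ᵥ x t ω + u t ω ⬝ᵥ R t *ᵥ u t ω))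
        + x T ω ⬝ᵥ Q T *ᵥ x T ω) ∂μ
      = (∑ t ∈ Finset.range T,
          ∫ ω, (x t ω ⬝ᵥ Q t *ᵥ x t ω + u t ω ⬝ᵥ R t *ᵥ u t ω) ∂μ)
        + ∫ ω, x T ω ⬝ᵥ P T *ᵥ x T ω ∂μ := by
    rw [integral_add isum (iQ T),
      integral_finset_sum (μ := μ)
        (f := fun t ω => x t ω ⬝ᵥ Q t *ᵥ x t ω + u t ω ⬝ᵥ R t *ᵥ u t ω)
        (Finset.range T) (fun t _ => (iQ t).add (iR t))]
    congr 1
    rw [hPT]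
  have htel : ∑ t ∈ Finset.range T,
      ((∫ ω, x t ω ⬝ᵥ P t *ᵥ x t ω ∂μ)
        - ∫ ω, x (t + 1) ω ⬝ᵥ P (t + 1) *ᵥ x (t + 1) ω ∂μ)
      = (∫ ω, x 0 ω ⬝ᵥ P 0 *ᵥ x 0 ω ∂μ) - ∫ ω, x T ω ⬝ᵥ P T *ᵥ x T ω ∂μ :=
    Finset.sum_range_sub' (fun t => ∫ ω, x t ω ⬝ᵥ P t *ᵥ x t ω ∂μ) T
  rw [hLHS, Finset.sum_congr rfl fun t ht => step t (Finset.mem_range.mp ht),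
    Finset.sum_add_distrib, Finset.sum_add_distrib, htel]
  ring
end
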